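/- For a uniformly random permutation π of size n and an integer 1 ≤ k ≤ n, the variance of the size of the sub-permutation generated by the entry k equals 2(n+1)(k−1)(n−k)/((k+1)²(k+2)). -/

import Mathlib

/-- All contiguous substrings (infixes) of a list. -/
def infixes (l : List ℕ) : List (List ℕ) := (l.tails.map List.inits).flatten

/-- `genLen l k` is the length of the longest contiguous substring of `l`
containing the entry `k` all of whose entries are `≥ k`, i.e. the size of the
sub-permutation of `l` generated by the entry `k`. -/
def genLen (l : List ℕ) (k : ℕ) : ℕ :=
  (((infixes l).filter
      (fun s => s.contains k && s.all (fun x => decide (k ≤ x)))).map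
    List.length).foldr max 0

lemma mem_infixes {s l : List ℕ} : s ∈ infixes l ↔ s <:+: l := by
  simp [infixes, List.mem_flatten, List.mem_tails, List.mem_inits,
    List.infix_iff_prefix_suffix]
  tauto

lemma le_foldr_max {l : List ℕ} {x : ℕ} (h : x ∈ l) : x ≤ l.foldr max 0 := by
  induction l with
  | nil => simp at h
  | cons a t ih =>
    rcases List.mem_cons.mp h with rfl | h
    · exact le_max_left _ _
    · exact le_trans (ih h) (le_max_right _ _)

lemma foldr_max_le {l : List ℕ} {c : ℕ} (h : ∀ x ∈ l, x ≤ c) : l.foldr max 0 ≤ c := by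
  induction l with
  | nil => simp
  | cons a t ih => exact max_le (h a (by simp)) (ih fun x hx => h x (by simp [hx]))

lemma le_genLen {l s : List ℕ} {k : ℕ} (hs : s <:+: l) (hk : k ∈ s)
    (hall : ∀ x ∈ s, k ≤ x) : s.length ≤ genLen l k := by
  apply le_foldr_max
  refine List.mem_map.mpr ⟨s, ?_, rfl⟩
  refine List.mem_filter.mpr ⟨mem_infixes.mpr hs, ?_⟩
  simp only [Bool.and_eq_true, List.all_eq_true, decide_eq_true_eq]
  exact ⟨by simpa using hk, hall⟩

lemma genLen_le {l : List ℕ} {k c : ℕ}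
    (h : ∀ s, s <:+: l → k ∈ s → (∀ x ∈ s, k ≤ x) → s.length ≤ c) :
    genLen l k ≤ c := by
  apply foldr_max_le
  intro x hx
  obtain ⟨s, hsmem, rfl⟩ := List.mem_map.mp hx
  obtain ⟨h1, h2⟩ := List.mem_filter.mp hsmem
  simp only [Bool.and_eq_true, List.all_eq_true, decide_eq_true_eq] at h2
  exact h s (mem_infixes.mp h1) (by simpa using h2.1) h2.2

lemma genLen_le_length {l : List ℕ} {k : ℕ} : genLen l k ≤ l.length :=
  genLen_le fun _ hs _ _ => hs.length_le

lemma prefix_takeWhile {p : ℕ → Bool} : ∀ {x u : List ℕ}, x <+: u →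
    (∀ a ∈ x, p a) → x <+: u.takeWhile p
  | [], _, _, _ => List.nil_prefix
  | a :: x, u, hx, h => by
    obtain ⟨t, rfl⟩ := hx
    rw [List.cons_append, List.takeWhile_cons_of_pos (h a (by simp))]
    exact List.cons_prefix_cons.mpr ⟨rfl, prefix_takeWhile ⟨t, rfl⟩
      (fun b hb => h b (by simp [hb]))⟩

lemma split_first {a : ℕ} : ∀ {l : List ℕ}, a ∈ l → ∃ u w, l = u ++ a :: w ∧ a ∉ u
  | [], h => by simp at h
  | b :: t, h => by
    by_cases hab : a = b
    · exact ⟨[], t, by simp [hab], by simp⟩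
    · obtain ⟨u, w, rfl, hu⟩ := split_first (l := t) (by
        rcases List.mem_cons.mp h with h | h
        · exact absurd h hab
        · exact h)
      exact ⟨b :: u, w, by simp, by simp; exact ⟨fun h => hab h, hu⟩⟩

lemma split_count_one {a : ℕ} {l : List ℕ} (h : l.count a = 1) :
    ∃ u w, l = u ++ a :: w ∧ a ∉ u ∧ a ∉ w := by
  have hmem : a ∈ l := List.count_pos_iff.mp (by omega)
  obtain ⟨u, w, rfl, hu⟩ := split_first hmem
  refine ⟨u, w, rfl, hu, ?_⟩
  rw [List.count_append, List.count_cons_self, List.count_eq_zero_of_not_mem hu] at h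
  intro hw
  have : 0 < w.count a := List.count_pos_iff.mpr hw
  omega

lemma unique_split {a : ℕ} : ∀ {u u' w w' : List ℕ}, u ++ a :: w = u' ++ a :: w' →
    a ∉ u → a ∉ u' → u = u' ∧ w = w'
  | [], [], w, w', h, _, _ => by simpa using h
  | [], b :: t, w, w', h, _, hu' => by
    simp only [List.nil_append, List.cons_append, List.cons.injEq] at h
    exact absurd (by simp [h.1]) hu'
  | c :: u, [], w, w', h, hu, _ => by
    simp only [List.cons_append, List.nil_append, List.cons.injEq] at h
    exact absurd (by simp [h.1]) hu
  | c :: u, b :: t, w, w', h, hu, hu' => by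
    simp only [List.cons_append, List.cons.injEq] at h
    obtain ⟨h1, h2⟩ := unique_split h.2 (by simp at hu; exact hu.2)
      (by simp at hu'; exact hu'.2)
    exact ⟨by rw [h.1, h1], h2⟩

lemma genLen_eq {u w : List ℕ} {k : ℕ} (hu : k ∉ u) (hw : k ∉ w) :
    genLen (u ++ k :: w) k =
      (u.reverse.takeWhile (fun x => decide (k ≤ x))).length + 1 +
        (w.takeWhile (fun x => decide (k ≤ x))).length := by
  apply le_antisymm
  · apply genLen_le
    intro s hs hks hall
    obtain ⟨x, y, rfl, hkx⟩ := split_first hks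
    obtain ⟨c, d, hl⟩ := hs
    have hcnt : (u ++ k :: w).count k = 1 := by
      rw [List.count_append, List.count_cons_self,
        List.count_eq_zero_of_not_mem hu, List.count_eq_zero_of_not_mem hw]
    rw [← hl] at hcnt
    have hassoc : c ++ (x ++ k :: y) ++ d = (c ++ x) ++ k :: (y ++ d) := by
      simp [List.append_assoc]
    rw [hassoc] at hl hcnt
    have hkcx : k ∉ c ++ x := by
      intro hmem
      have h1 : 0 < (c ++ x).count k := List.count_pos_iff.mpr hmem
      rw [List.count_append, List.count_cons_self] at hcnt
      omega
    obtain ⟨hux, hwyd⟩ := unique_split hl.symm hu hkcx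
    have hxa : x.length ≤ (u.reverse.takeWhile (fun x => decide (k ≤ x))).length := by
      have hpre : x.reverse <+: u.reverse := by
        rw [hux, List.reverse_append]
        exact ⟨c.reverse, rfl⟩
      have := prefix_takeWhile hpre (fun b hb =>
        decide_eq_true (hall b (List.mem_append_left _ (List.mem_reverse.mp hb))))
      simpa using this.length_le
    have hyr : y.length ≤ (w.takeWhile (fun x => decide (k ≤ x))).length := by
      have hpre : y <+: w := by rw [hwyd]; exact ⟨d, rfl⟩
      have := prefix_takeWhile hpre (fun b hb =>
        decide_eq_true (hall b (List.mem_append_right _ (List.mem_cons_of_mem _ hb))))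
      exact this.length_le
    simp only [List.length_append, List.length_cons]
    omega
  · have hinfix : (u.reverse.takeWhile (fun x => decide (k ≤ x))).reverse ++ k :: w.takeWhile (fun x => decide (k ≤ x)) <:+: u ++ k :: w := by
      refine ⟨(u.reverse.dropWhile (fun x => decide (k ≤ x))).reverse, w.dropWhile (fun x => decide (k ≤ x)), ?_⟩
      have hu' : (u.reverse.dropWhile (fun x => decide (k ≤ x))).reverse ++ (u.reverse.takeWhile (fun x => decide (k ≤ x))).reverse = u := by
        rw [← List.reverse_append, List.takeWhile_append_dropWhile, List.reverse_reverse]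
      have hw' : w.takeWhile (fun x => decide (k ≤ x)) ++ w.dropWhile (fun x => decide (k ≤ x)) = w := List.takeWhile_append_dropWhile ..
      conv_rhs => rw [← hu', ← hw']
      simp [List.append_assoc]
    have hmem : k ∈ (u.reverse.takeWhile (fun x => decide (k ≤ x))).reverse ++ k :: w.takeWhile (fun x => decide (k ≤ x)) := by simp
    have hall : ∀ x ∈ (u.reverse.takeWhile (fun x => decide (k ≤ x))).reverse ++ k :: w.takeWhile (fun x => decide (k ≤ x)), k ≤ x := by
      intro x hx
      simp only [List.mem_append, List.mem_reverse, List.mem_cons] at hx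
      rcases hx with hx | hx | hx
      · simpa using List.mem_takeWhile_imp hx
      · omega
      · simpa using List.mem_takeWhile_imp hx
    have := le_genLen hinfix hmem hall
    simp only [List.length_append, List.length_reverse, List.length_cons] at this
    omega

lemma genLen_concrete {u w : List ℕ} {k : ℕ} :
    genLen (u ++ k :: w) k ≤ u.length + 1 + w.length := by
  have := genLen_le_length (l := u ++ k :: w) (k := k)
  simp only [List.length_append, List.length_cons] at this
  omega

lemma insertIdx_append_left {v : ℕ} : ∀ (xs : List ℕ) (ys : List ℕ) (j : ℕ), j ≤ xs.length →
    (xs ++ ys).insertIdx j v = xs.insertIdx j v ++ ys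
  | xs, ys, 0, _ => rfl
  | x :: xs, ys, j + 1, h => by
    simp only [List.cons_append, List.insertIdx_succ_cons]
    rw [insertIdx_append_left xs ys j (by simpa using h)]
  | [], ys, j + 1, h => by simp at h

lemma insertIdx_append_right {v : ℕ} : ∀ (xs ys : List ℕ) (j : ℕ),
    (xs ++ ys).insertIdx (xs.length + j) v = xs ++ ys.insertIdx j v
  | [], ys, j => by simp
  | x :: xs, ys, j => by
    have : (x :: xs).length + j = (xs.length + j) + 1 := by simp; omega
    rw [this, List.cons_append, List.insertIdx_succ_cons,
      insertIdx_append_right xs ys j, List.cons_append]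

lemma reverse_insertIdx {v : ℕ} : ∀ (u : List ℕ) (i : ℕ), i ≤ u.length →
    (u.insertIdx i v).reverse = u.reverse.insertIdx (u.length - i) v
  | u, 0, _ => by
    simp only [List.insertIdx_zero, List.reverse_cons, Nat.sub_zero]
    rw [← List.length_reverse (as := u), List.insertIdx_length_self]
  | [], i + 1, h => by simp at h
  | b :: u, i + 1, h => by
    simp only [List.insertIdx_succ_cons, List.reverse_cons]
    rw [reverse_insertIdx u i (by simpa using h)]
    have hlen : (b :: u).length - (i + 1) = u.length - i := by simp
    rw [hlen, insertIdx_append_left _ _ _ (by simp)]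

lemma takeWhile_insertIdx {v k : ℕ} (hv : k ≤ v) : ∀ (z : List ℕ) (j : ℕ), j ≤ z.length →
    ((z.insertIdx j v).takeWhile (fun x => decide (k ≤ x))).length =
      if j ≤ (z.takeWhile (fun x => decide (k ≤ x))).length
      then (z.takeWhile (fun x => decide (k ≤ x))).length + 1
      else (z.takeWhile (fun x => decide (k ≤ x))).length
  | z, 0, _ => by
    rw [List.insertIdx_zero]
    simp [List.takeWhile_cons, hv]
  | [], j + 1, h => by simp at h
  | b :: z, j + 1, h => by
    rw [List.insertIdx_succ_cons]
    by_cases hb : k ≤ b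
    · have IH := takeWhile_insertIdx hv z j (by simpa using h)
      simp only [List.takeWhile_cons, decide_eq_true hb, if_true, List.length_cons, IH]
      by_cases hj : j ≤ (z.takeWhile (fun x => decide (k ≤ x))).length
      · rw [if_pos hj, if_pos (by omega)]
      · rw [if_neg hj, if_neg (by omega)]
    · simp [List.takeWhile_cons, hb]

lemma genLen_insertIdx {u w : List ℕ} {k v i : ℕ} (hu : k ∉ u) (hw : k ∉ w)
    (hkv : k ≤ v) (hvk : v ≠ k) (hi : i ≤ u.length + 1 + w.length) :
    genLen ((u ++ k :: w).insertIdx i v) k =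
      if u.length - (u.reverse.takeWhile (fun x => decide (k ≤ x))).length ≤ i ∧
          i ≤ u.length + 1 + (w.takeWhile (fun x => decide (k ≤ x))).length
      then genLen (u ++ k :: w) k + 1 else genLen (u ++ k :: w) k := by
  have ha : (u.reverse.takeWhile (fun x => decide (k ≤ x))).length ≤ u.length := by
    have := (List.takeWhile_prefix (l := u.reverse) (fun x => decide (k ≤ x))).length_le
    simpa using this
  have hr : (w.takeWhile (fun x => decide (k ≤ x))).length ≤ w.length :=
    (List.takeWhile_prefix _).length_le
  rw [genLen_eq hu hw]
  by_cases hcase : i ≤ u.length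
  · rw [insertIdx_append_left _ _ _ hcase]
    have hu' : k ∉ u.insertIdx i v := by
      intro hmem
      rcases (List.mem_insertIdx hcase).mp hmem with h | h
      · exact hvk h.symm
      · exact hu h
    rw [genLen_eq hu' hw, reverse_insertIdx u i hcase,
      takeWhile_insertIdx hkv u.reverse (u.length - i) (by simp)]
    by_cases h2 : u.length - i ≤ (u.reverse.takeWhile (fun x => decide (k ≤ x))).length
    · rw [if_pos h2, if_pos ⟨by omega, by omega⟩]
      omega
    · rw [if_neg h2, if_neg (by omega)]
  · have hj : i - (u.length + 1) ≤ w.length := by omega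
    have hij : i = u.length + (1 + (i - (u.length + 1))) := by omega
    rw [hij, insertIdx_append_right]
    have hcons : (k :: w).insertIdx (1 + (i - (u.length + 1))) v =
        k :: w.insertIdx (i - (u.length + 1)) v := by
      rw [Nat.add_comm]
      exact List.insertIdx_succ_cons
    rw [hcons]
    have hw' : k ∉ w.insertIdx (i - (u.length + 1)) v := by
      intro hmem
      rcases (List.mem_insertIdx hj).mp hmem with h | h
      · exact hvk h.symm
      · exact hw h
    rw [genLen_eq hu hw', takeWhile_insertIdx hkv w _ hj]
    by_cases h2 : i - (u.length + 1) ≤ (w.takeWhile (fun x => decide (k ≤ x))).length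
    · rw [if_pos h2, if_pos ⟨by omega, by omega⟩]
      omega
    · rw [if_neg h2, if_neg (by omega)]

lemma insert_sum (f : ℕ → ℚ) {k v : ℕ} (u w : List ℕ) (hu : k ∉ u) (hw : k ∉ w)
    (hkv : k ≤ v) (hvk : v ≠ k) :
    ∑ i ∈ Finset.range ((u ++ k :: w).length + 1),
        f (genLen ((u ++ k :: w).insertIdx i v) k) =
      (((u ++ k :: w).length - genLen (u ++ k :: w) k : ℕ) : ℚ) *
          f (genLen (u ++ k :: w) k) +
        ((genLen (u ++ k :: w) k + 1 : ℕ) : ℚ) * f (genLen (u ++ k :: w) k + 1) := by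
  have ha : (u.reverse.takeWhile (fun x => decide (k ≤ x))).length ≤ u.length := by
    have := (List.takeWhile_prefix (l := u.reverse) (fun x => decide (k ≤ x))).length_le
    simpa using this
  have hr : (w.takeWhile (fun x => decide (k ≤ x))).length ≤ w.length :=
    (List.takeWhile_prefix _).length_le
  have hL : (u ++ k :: w).length = u.length + 1 + w.length := by
    simp only [List.length_append, List.length_cons]; omega
  have hm : genLen (u ++ k :: w) k =
      (u.reverse.takeWhile (fun x => decide (k ≤ x))).length + 1 +
        (w.takeWhile (fun x => decide (k ≤ x))).length := genLen_eq hu hw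
  rw [hL, hm]
  rw [Finset.sum_congr rfl (fun i hi => by
    rw [genLen_insertIdx hu hw hkv hvk (by
      simpa using Nat.lt_succ_iff.mp (Finset.mem_range.mp hi)), hm, apply_ite f])]
  rw [Finset.sum_ite, Finset.sum_const, Finset.sum_const]
  have hfil : (Finset.range (u.length + 1 + w.length + 1)).filter
      (fun i => u.length - (u.reverse.takeWhile (fun x => decide (k ≤ x))).length ≤ i ∧
        i ≤ u.length + 1 + (w.takeWhile (fun x => decide (k ≤ x))).length) =
      Finset.Icc (u.length - (u.reverse.takeWhile (fun x => decide (k ≤ x))).length)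
        (u.length + 1 + (w.takeWhile (fun x => decide (k ≤ x))).length) := by
    ext i
    simp only [Finset.mem_filter, Finset.mem_range, Finset.mem_Icc]
    omega
  have hcard1 : ((Finset.range (u.length + 1 + w.length + 1)).filter
      (fun i => u.length - (u.reverse.takeWhile (fun x => decide (k ≤ x))).length ≤ i ∧
        i ≤ u.length + 1 + (w.takeWhile (fun x => decide (k ≤ x))).length)).card =
      (u.reverse.takeWhile (fun x => decide (k ≤ x))).length + 1 +
        (w.takeWhile (fun x => decide (k ≤ x))).length + 1 := by
    rw [hfil, Nat.card_Icc]
    omega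
  have hcard2 : ((Finset.range (u.length + 1 + w.length + 1)).filter
      (fun i => ¬(u.length - (u.reverse.takeWhile (fun x => decide (k ≤ x))).length ≤ i ∧
        i ≤ u.length + 1 + (w.takeWhile (fun x => decide (k ≤ x))).length))).card =
      u.length + 1 + w.length -
        ((u.reverse.takeWhile (fun x => decide (k ≤ x))).length + 1 +
          (w.takeWhile (fun x => decide (k ≤ x))).length) := by
    have := Finset.card_filter_add_card_filter_not (s := Finset.range (u.length + 1 + w.length + 1))
      (p := fun i => u.length - (u.reverse.takeWhile (fun x => decide (k ≤ x))).length ≤ i ∧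
        i ≤ u.length + 1 + (w.takeWhile (fun x => decide (k ≤ x))).length)
    rw [Finset.card_range, hcard1] at this
    omega
  rw [hcard1, hcard2, nsmul_eq_mul, nsmul_eq_mul, Nat.cast_sub (by omega)]
  push_cast
  ring

lemma permAux_eq (v : ℕ) : ∀ (σ : List ℕ),
    List.permutations'Aux v σ = (List.range (σ.length + 1)).map (fun i => σ.insertIdx i v)
  | [] => by simp [List.range_succ]
  | b :: t => by
    rw [List.permutations'Aux, permAux_eq v t]
    have hr : List.range (t.length + 1 + 1) = 0 :: (List.range (t.length + 1)).map Nat.succ :=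
      List.range_succ_eq_map
    rw [List.length_cons, hr, List.map_cons, List.map_map, List.map_map]
    simp only [List.insertIdx_zero, Function.comp_def, Nat.succ_eq_add_one,
      List.insertIdx_succ_cons]

lemma list_range_sum (g : ℕ → ℚ) : ∀ (m : ℕ),
    ((List.range m).map g).sum = ∑ i ∈ Finset.range m, g i
  | 0 => by simp
  | m + 1 => by
    rw [List.range_succ, List.map_append, List.sum_append, Finset.sum_range_succ,
      list_range_sum g m]
    simp

lemma step_lemma (f : ℕ → ℚ) {k : ℕ} (hk1 : 1 ≤ k) {n : ℕ} (hkn : k ≤ n) :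
    ((List.range' 1 (n + 1)).permutations.map (fun l => f (genLen l k))).sum =
      ((List.range' 1 n).permutations.map (fun l =>
        ((n - genLen l k : ℕ) : ℚ) * f (genLen l k) +
          ((genLen l k + 1 : ℕ) : ℚ) * f (genLen l k + 1))).sum := by
  have hperm1 : List.Perm (List.range' 1 (n + 1)) ((n + 1) :: List.range' 1 n) := by
    have : List.range' 1 (n + 1) = List.range' 1 n ++ [n + 1] := by
      have h11 : 1 + 1 * n = n + 1 := by omega
      rw [List.range'_concat, h11]
    rw [this]
    exact List.perm_append_singleton _ _
  have e1 : ((List.range' 1 (n + 1)).permutations.map (fun l => f (genLen l k))).sum =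
      (((n + 1) :: List.range' 1 n).permutations'.map (fun l => f (genLen l k))).sum :=
    ((hperm1.permutations.trans (List.permutations_perm_permutations' _)).map _).sum_eq
  rw [e1]
  have e2 : ((n + 1) :: List.range' 1 n).permutations' =
      (List.range' 1 n).permutations'.flatMap (List.permutations'Aux (n + 1)) := rfl
  rw [e2, List.flatMap_def, List.map_flatten, List.map_map, List.sum_flatten, List.map_map]
  have e3 : ∀ σ ∈ (List.range' 1 n).permutations',
      (List.sum ∘ (List.map fun l => f (genLen l k)) ∘ List.permutations'Aux (n + 1)) σ =
        ((n - genLen σ k : ℕ) : ℚ) * f (genLen σ k) +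
          ((genLen σ k + 1 : ℕ) : ℚ) * f (genLen σ k + 1) := by
    intro σ hσ
    have hs : List.Perm σ (List.range' 1 n) := List.mem_permutations'.mp hσ
    have hlen : σ.length = n := by rw [hs.length_eq, List.length_range']
    have hcnt : σ.count k = 1 := by
      rw [hs.count_eq]
      exact List.count_eq_one_of_mem List.nodup_range' (by
        rw [List.mem_range'_1]; omega)
    obtain ⟨u, w, rfl, hu, hw⟩ := split_count_one hcnt
    have hins := insert_sum f (v := n + 1) u w hu hw (by omega) (by omega)
    rw [hlen] at hins
    simp only [Function.comp_apply]
    rw [permAux_eq, List.map_map, list_range_sum, hlen]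
    exact hins
  rw [List.map_congr_left e3]
  exact (((List.permutations_perm_permutations' (List.range' 1 n)).symm).map _).sum_eq

lemma sum_map_poly (l : List (List ℕ)) (g h : List ℕ → ℚ) (c d e : ℚ) :
    (l.map (fun x => c * g x + d * h x + e)).sum =
      c * (l.map g).sum + d * (l.map h).sum + l.length * e := by
  induction l with
  | nil => simp
  | cons a t ih =>
    simp only [List.map_cons, List.sum_cons, ih, List.length_cons]
    push_cast
    ring

lemma sum_map_const (l : List (List ℕ)) (c : ℚ) :
    (l.map (fun _ => c)).sum = l.length * c := by
  induction l with
  | nil => simp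
  | cons a t ih =>
    simp only [List.map_cons, List.sum_cons, ih, List.length_cons]
    push_cast
    ring

lemma genLen_eq_one_of_base {k : ℕ} (hk1 : 1 ≤ k) {σ : List ℕ}
    (hσ : σ ∈ (List.range' 1 k).permutations) : genLen σ k = 1 := by
  have hs : List.Perm σ (List.range' 1 k) := List.mem_permutations.mp hσ
  have hcnt : σ.count k = 1 := by
    rw [hs.count_eq]
    exact List.count_eq_one_of_mem List.nodup_range' (by
      rw [List.mem_range'_1]; omega)
  obtain ⟨u, w, rfl, hu, hw⟩ := split_count_one hcnt
  have hlt : ∀ x ∈ u ++ k :: w, x ≤ k := by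
    intro x hx
    have := hs.mem_iff.mp hx
    rw [List.mem_range'_1] at this
    omega
  rw [genLen_eq hu hw]
  have h1 : u.reverse.takeWhile (fun x => decide (k ≤ x)) = [] := by
    rw [List.eq_nil_iff_forall_not_mem]
    intro x hx
    have hxk : k ≤ x := by simpa using List.mem_takeWhile_imp hx
    have hxu : x ∈ u := List.mem_reverse.mp ((List.takeWhile_prefix _).subset hx)
    have : x ≤ k := hlt x (List.mem_append_left _ hxu)
    have : x = k := le_antisymm this hxk
    exact hu (this ▸ hxu)
  have h2 : w.takeWhile (fun x => decide (k ≤ x)) = [] := by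
    rw [List.eq_nil_iff_forall_not_mem]
    intro x hx
    have hxk : k ≤ x := by simpa using List.mem_takeWhile_imp hx
    have hxw : x ∈ w := (List.takeWhile_prefix _).subset hx
    have : x ≤ k := hlt x (List.mem_append_right _ (List.mem_cons_of_mem _ hxw))
    have : x = k := le_antisymm this hxk
    exact hw (this ▸ hxw)
  rw [h1, h2]
  simp

lemma genLen_le_of_mem_perms {k n : ℕ} {σ : List ℕ}
    (hσ : σ ∈ (List.range' 1 n).permutations) : genLen σ k ≤ n := by
  have hs : List.Perm σ (List.range' 1 n) := List.mem_permutations.mp hσ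
  have := genLen_le_length (l := σ) (k := k)
  rw [hs.length_eq, List.length_range'] at this
  exact this

lemma claim1 {k : ℕ} (hk1 : 1 ≤ k) {n : ℕ} (hkn : k ≤ n) :
    ((List.range' 1 n).permutations.map (fun l => (genLen l k : ℚ))).sum * ((k : ℚ) + 1) =
      (n.factorial : ℚ) * (2 * n - k + 1) := by
  induction n, hkn using Nat.le_induction with
  | base =>
    rw [List.map_congr_left (fun σ hσ => by
      rw [genLen_eq_one_of_base hk1 hσ, Nat.cast_one] :
      ∀ σ ∈ (List.range' 1 k).permutations, ((genLen σ k : ℕ) : ℚ) = (fun _ => (1:ℚ)) σ)]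
    rw [sum_map_const, List.length_permutations, List.length_range']
    ring
  | succ n hn ih =>
    rw [step_lemma (fun m => (m : ℚ)) hk1 hn]
    rw [List.map_congr_left (fun σ hσ => by
      have hm : genLen σ k ≤ n := genLen_le_of_mem_perms hσ
      push_cast [Nat.cast_sub hm]
      ring :
      ∀ σ ∈ (List.range' 1 n).permutations,
        ((n - genLen σ k : ℕ) : ℚ) * ((genLen σ k : ℕ) : ℚ) +
            ((genLen σ k + 1 : ℕ) : ℚ) * ((genLen σ k + 1 : ℕ) : ℚ) =
          (fun l => ((n : ℚ) + 2) * ((genLen l k : ℕ) : ℚ) +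
            0 * ((genLen l k : ℕ) : ℚ) + 1) σ)]
    rw [sum_map_poly, List.length_permutations, List.length_range']
    rw [Nat.factorial_succ]
    push_cast
    linear_combination ((n : ℚ) + 2) * ih

lemma claim2 {k : ℕ} (hk1 : 1 ≤ k) {n : ℕ} (hkn : k ≤ n) :
    ((List.range' 1 n).permutations.map (fun l => (genLen l k : ℚ) ^ 2)).sum *
        (((k : ℚ) + 1) * ((k : ℚ) + 2)) =
      (n.factorial : ℚ) * (((k : ℚ) + 1) * ((k : ℚ) + 2) +
        6 * ((n : ℚ) - k) * ((k : ℚ) + 2) + 6 * ((n : ℚ) - k) * ((n : ℚ) - k - 1)) := by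
  induction n, hkn using Nat.le_induction with
  | base =>
    rw [List.map_congr_left (fun σ hσ => by
      rw [genLen_eq_one_of_base hk1 hσ, Nat.cast_one, one_pow] :
      ∀ σ ∈ (List.range' 1 k).permutations, ((genLen σ k : ℕ) : ℚ) ^ 2 = (fun _ => (1:ℚ)) σ)]
    rw [sum_map_const, List.length_permutations, List.length_range']
    ring
  | succ n hn ih =>
    rw [step_lemma (fun m => (m : ℚ) ^ 2) hk1 hn]
    rw [List.map_congr_left (fun σ hσ => by
      have hm : genLen σ k ≤ n := genLen_le_of_mem_perms hσ
      push_cast [Nat.cast_sub hm]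
      ring :
      ∀ σ ∈ (List.range' 1 n).permutations,
        ((n - genLen σ k : ℕ) : ℚ) * ((genLen σ k : ℕ) : ℚ) ^ 2 +
            ((genLen σ k + 1 : ℕ) : ℚ) * ((genLen σ k + 1 : ℕ) : ℚ) ^ 2 =
          (fun l => ((n : ℚ) + 3) * ((genLen l k : ℕ) : ℚ) ^ 2 +
            3 * ((genLen l k : ℕ) : ℚ) + 1) σ)]
    rw [sum_map_poly, List.length_permutations, List.length_range']
    rw [Nat.factorial_succ]
    have h1 := claim1 hk1 hn
    push_cast
    linear_combination ((n : ℚ) + 3) * ih + 3 * ((k : ℚ) + 2) * h1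

/-- For a uniformly random permutation `π` of `{1,...,n}` and `1 ≤ k ≤ n`, the
variance of the size of the sub-permutation of `π` generated by the entry `k`
equals `2(n+1)(k-1)(n-k)/((k+1)^2 (k+2))`. -/
theorem variance_genLen (n k : ℕ) (hk1 : 1 ≤ k) (hkn : k ≤ n) :
    (((List.range' 1 n).permutations.map (fun l => (genLen l k : ℚ) ^ 2)).sum) /
          (n.factorial : ℚ) -
        ((((List.range' 1 n).permutations.map (fun l => (genLen l k : ℚ))).sum) /
            (n.factorial : ℚ)) ^ 2 =
      2 * ((n : ℚ) + 1) * ((k : ℚ) - 1) * ((n : ℚ) - k) /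
        (((k : ℚ) + 1) ^ 2 * ((k : ℚ) + 2)) := by
  have h1 := claim1 hk1 hkn
  have h2 := claim2 hk1 hkn
  have hk1' : ((k : ℚ) + 1) ≠ 0 := by positivity
  have hk2' : ((k : ℚ) + 2) ≠ 0 := by positivity
  have hf : ((n.factorial : ℕ) : ℚ) ≠ 0 := by
    exact_mod_cast Nat.factorial_ne_zero n
  have e1 : ((List.range' 1 n).permutations.map (fun l => (genLen l k : ℚ))).sum =
      (n.factorial : ℚ) * (2 * n - k + 1) / ((k : ℚ) + 1) :=
    (eq_div_iff hk1').mpr h1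
  have e2 : ((List.range' 1 n).permutations.map (fun l => (genLen l k : ℚ) ^ 2)).sum =
      (n.factorial : ℚ) * (((k : ℚ) + 1) * ((k : ℚ) + 2) +
          6 * ((n : ℚ) - k) * ((k : ℚ) + 2) + 6 * ((n : ℚ) - k) * ((n : ℚ) - k - 1)) /
        (((k : ℚ) + 1) * ((k : ℚ) + 2)) :=
    (eq_div_iff (mul_ne_zero hk1' hk2')).mpr h2
  rw [e1, e2]
  field_simp
  ring
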